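/- Let G be a binary quasigroup of order n with operation * and let k ≥ 1. Then for every even d ≥ 2 there exists a k-multiplex over S_d(G); that is, Per_k(S_d(G)) > 0 for all even d. -/

import Mathlib

/-- The left-to-right product `((a₁ * a₂) * ⋯) * a_m` of a list of elements of `Fin n`
under a binary operation `op`, where `e` is returned for the empty list
(all uses below have nonempty lists). -/
def leftProd {n : ℕ} (op : Fin n → Fin n → Fin n) (e : Fin n) : List (Fin n) → Fin n
  | [] => e
  | a :: l => l.foldl op a

/-- `SdSet op e d` is the support `S_d(G)` of the `d`-dimensional MDS code
`M(G^[d-1])` of the `(d-1)`-iterated quasigroup `G` with operation `op`: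
the set of `(x₁, …, x_d)` with `((…((x₁ * x₂) * x₃) * …) * x_d = e`,
where `e` plays the role of the fixed element `1` of `Fin n`. -/
def SdSet {n : ℕ} (op : Fin n → Fin n → Fin n) (e : Fin n) (d : ℕ) :
    Set (Fin d → Fin n) :=
  {x | leftProd op e (List.ofFn x) = e}

/-- `IsKMultiplex S k K` says that the multiset `K` is a `k`-multiplex over
`S ⊆ (Fin n)^d`: it consists of `k·n` elements of `S` and, for every coordinate `j`
and every symbol `v`, exactly `k` elements of `K` (counted with multiplicity) have
`j`-th coordinate equal to `v`. -/
def IsKMultiplex {n d : ℕ} (S : Set (Fin d → Fin n)) (k : ℕ)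
    (K : Multiset (Fin d → Fin n)) : Prop :=
  Multiset.card K = k * n ∧ (∀ x ∈ K, x ∈ S) ∧
    ∀ (j : Fin d) (v : Fin n), Multiset.card (K.filter (fun x => x j = v)) = k

/-- `Perk S k` is the number of `k`-multiplexes over `S` (the `k`-multipermanent). -/
noncomputable def Perk {n d : ℕ} (S : Set (Fin d → Fin n)) (k : ℕ) : ℕ :=
  Set.ncard {K : Multiset (Fin d → Fin n) | IsKMultiplex S k K}

/-- `perk S k` is the number of `k`-plexes in `S` (`k`-multiplexes without repeated
elements), i.e. the `k`-permanent. -/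
noncomputable def perk {n d : ℕ} (S : Set (Fin d → Fin n)) (k : ℕ) : ℕ :=
  Set.ncard {K : Multiset (Fin d → Fin n) | K.Nodup ∧ IsKMultiplex S k K}

noncomputable def linv {n : ℕ} (op : Fin n → Fin n → Fin n) (b y : Fin n) : Fin n :=
  if h : ∃ x, op b x = y then h.choose else y

lemma op_linv {n : ℕ} {op : Fin n → Fin n → Fin n} {b : Fin n}
    (hb : Function.Surjective (op b)) (y : Fin n) : op b (linv op b y) = y := by
  rw [linv, dif_pos (hb y)]
  exact (hb y).choose_spec

noncomputable def Wc {n : ℕ} (op : Fin n → Fin n → Fin n) : ℕ → Fin n → Fin n → List (Fin n)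
  | 0, _, _ => []
  | j + 1, c, a => a :: linv op (op c a) c :: Wc op j c a

lemma Wc_length {n : ℕ} (op : Fin n → Fin n → Fin n) (j : ℕ) (c a : Fin n) :
    (Wc op j c a).length = 2 * j := by
  induction j with
  | zero => rfl
  | succ j ih => simp only [Wc, List.length_cons, ih]; omega

lemma Wc_foldl {n : ℕ} {op : Fin n → Fin n → Fin n}
    (hop : ∀ b, Function.Surjective (op b)) (j : ℕ) (c a : Fin n) :
    (Wc op j c a).foldl op c = c := by
  induction j with
  | zero => rfl
  | succ j ih =>
    simp only [Wc, List.foldl_cons]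
    rw [op_linv (hop _)]
    exact ih

lemma Wc_getElem {n : ℕ} (op : Fin n → Fin n → Fin n) (j : ℕ) (c a : Fin n) (i : ℕ)
    (hi : i < (Wc op j c a).length) :
    (Wc op j c a)[i] = if i % 2 = 0 then a else linv op (op c a) c := by
  induction j generalizing i with
  | zero => simp [Wc] at hi
  | succ j ih =>
    match i with
    | 0 => rfl
    | 1 => rfl
    | (i+2) =>
      have hi' : i < (Wc op j c a).length := by
        simp only [Wc, List.length_cons] at hi; omega
      have h1 : (Wc op (j+1) c a)[i+2]'hi = (Wc op j c a)[i]'hi' := rfl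
      rw [h1, ih i hi', Nat.add_mod_right]

lemma linv_bij1 {n : ℕ} {op : Fin n → Fin n → Fin n}
    (hop : ∀ a : Fin n, Function.Bijective (op a) ∧ Function.Bijective (fun x => op x a))
    (e : Fin n) : Function.Bijective (fun a => linv op a e) := by
  constructor
  · intro a a' h
    simp only at h
    have h1 : op a (linv op a e) = e := op_linv (hop a).1.surjective e
    have h2 : op a' (linv op a' e) = e := op_linv (hop a').1.surjective e
    rw [← h] at h2
    exact (hop (linv op a e)).2.injective (h1.trans h2.symm)
  · intro z
    obtain ⟨a, ha⟩ := (hop z).2.surjective e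
    refine ⟨a, ?_⟩
    have h1 : op a (linv op a e) = e := op_linv (hop a).1.surjective e
    exact (hop a).1.injective (h1.trans ha.symm)

lemma linv_bij2 {n : ℕ} {op : Fin n → Fin n → Fin n}
    (hop : ∀ a : Fin n, Function.Bijective (op a) ∧ Function.Bijective (fun x => op x a))
    (c : Fin n) : Function.Bijective (fun a => linv op (op c a) c) := by
  constructor
  · intro a a' h
    simp only at h
    have h1 : op (op c a) (linv op (op c a) c) = c := op_linv (hop _).1.surjective c
    have h2 : op (op c a') (linv op (op c a') c) = c := op_linv (hop _).1.surjective c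
    rw [← h] at h2
    have := (hop (linv op (op c a) c)).2.injective (h1.trans h2.symm)
    exact (hop c).1.injective this
  · intro z
    obtain ⟨b, hb⟩ := (hop z).2.surjective c
    obtain ⟨a, ha⟩ := (hop c).1.surjective b
    refine ⟨a, ?_⟩
    have h1 : op (op c a) (linv op (op c a) c) = c := op_linv (hop _).1.surjective c
    simp only [ha] at h1 ⊢
    exact (hop b).1.injective (h1.trans hb.symm)

noncomputable def Tlist {n : ℕ} (op : Fin n → Fin n → Fin n) (e : Fin n) (m : ℕ)
    (a : Fin n) : List (Fin n) :=
  a :: linv op a e :: Wc op m e a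

lemma Tlist_length {n : ℕ} (op : Fin n → Fin n → Fin n) (e : Fin n) (m : ℕ) (a : Fin n) :
    (Tlist op e m a).length = 2 * m + 2 := by
  simp [Tlist, Wc_length]

lemma filter_nsmul {α : Type*} (p : α → Prop) [DecidablePred p] (k : ℕ) (s : Multiset α) :
    (k • s).filter p = k • s.filter p := by
  induction k with
  | zero => simp
  | succ k ih => simp [succ_nsmul, Multiset.filter_add, ih]

lemma card_filter_eq_one {α : Type*} [Fintype α] [DecidableEq α] {F : α → α}
    (hF : Function.Bijective F) (v : α) :
    (Finset.univ.filter (fun a => F a = v)).card = 1 := by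
  rw [Finset.card_eq_one]
  refine ⟨(Equiv.ofBijective F hF).symm v, ?_⟩
  ext a
  simp only [Finset.mem_filter, Finset.mem_univ, true_and, Finset.mem_singleton]
  constructor
  · intro h
    have h' : (Equiv.ofBijective F hF) a = v := h
    exact (Equiv.eq_symm_apply _).mpr h'
  · rintro rfl
    exact Equiv.apply_symm_apply (Equiv.ofBijective F hF) v


/-- For a binary quasigroup `op` of order `n` and `k ≥ 1`, for every
even `d ≥ 2` there exists a `k`-multiplex over `S_d(G)`, i.e. `Per_k(S_d(G)) > 0`. -/
theorem perk_pos_of_even_dim {n : ℕ} (op : Fin n → Fin n → Fin n) (e : Fin n)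
    (hop : ∀ a : Fin n, Function.Bijective (op a) ∧ Function.Bijective (fun x => op x a))
    (k : ℕ) (hk : 1 ≤ k) :
    ∀ d : ℕ, 2 ≤ d → Even d → 0 < Perk (SdSet op e d) k := by
  intro d hd hde
  obtain ⟨mm, rfl⟩ := hde
  obtain ⟨m, rfl⟩ : ∃ m, mm = m + 1 := ⟨mm - 1, by omega⟩
  set d := (m + 1) + (m + 1) with hdd
  have hlen : ∀ a : Fin n, (Tlist op e m a).length = d := by
    intro a; rw [Tlist_length]; omega
  -- the tuple function
  set X : Fin n → (Fin d → Fin n) :=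
    fun a j => (Tlist op e m a)[(j : ℕ)]'(by rw [hlen]; exact j.isLt) with hX
  have hXval : ∀ (a : Fin n) (j : Fin d),
      X a j = if (j : ℕ) = 0 then a else if (j : ℕ) = 1 then linv op a e
        else if (j : ℕ) % 2 = 0 then a else linv op (op e a) e := by
    intro a j
    rcases j with ⟨jv, hj⟩
    match jv with
    | 0 => rfl
    | 1 => rfl
    | (i+2) =>
      have hi : i < (Wc op m e a).length := by
        rw [Wc_length]; omega
      have : X a ⟨i+2, hj⟩ = (Wc op m e a)[i]'hi := rfl
      rw [this, Wc_getElem op m e a i hi]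
      simp [Nat.add_mod_right]
  have hofFn : ∀ a : Fin n, List.ofFn (X a) = Tlist op e m a := by
    intro a
    apply List.ext_getElem
    · rw [List.length_ofFn, hlen]
    · intro i h1 h2
      simp only [List.getElem_ofFn]
      rfl
  -- membership in SdSet
  have hmem : ∀ a : Fin n, X a ∈ SdSet op e d := by
    intro a
    show leftProd op e (List.ofFn (X a)) = e
    rw [hofFn a]
    show (linv op a e :: Wc op m e a).foldl op a = e
    rw [List.foldl_cons, op_linv (hop a).1.surjective]
    exact Wc_foldl (fun b => (hop b).1.surjective) m e a
  -- coordinate bijectivity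
  have hbij : ∀ j : Fin d, Function.Bijective (fun a => X a j) := by
    intro j
    have : (fun a => X a j) = (fun a => if (j : ℕ) = 0 then a else if (j : ℕ) = 1 then linv op a e
        else if (j : ℕ) % 2 = 0 then a else linv op (op e a) e) := funext (fun a => hXval a j)
    rw [this]
    split_ifs
    · exact Function.bijective_id
    · exact linv_bij1 hop e
    · exact Function.bijective_id
    · exact linv_bij2 hop e
  -- the multiplex
  set K : Multiset (Fin d → Fin n) := k • (Finset.univ.val.map X) with hK
  have hKmult : IsKMultiplex (SdSet op e d) k K := by
    refine ⟨?_, ?_, ?_⟩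
    · simp [hK, Multiset.card_nsmul]
    · intro x hx
      rw [Multiset.mem_nsmul] at hx
      replace hx := hx.2
      obtain ⟨a, _, rfl⟩ := Multiset.mem_map.mp hx
      exact hmem a
    · intro j v
      classical
      rw [hK, filter_nsmul, Multiset.card_nsmul]
      have h1 : (Finset.univ.val.map X).filter (fun x => x j = v)
          = (Finset.univ.val.filter (fun a => X a j = v)).map X := by
        rw [Multiset.filter_map]
        rfl
      rw [h1, Multiset.card_map]
      have h2 : Multiset.card (Finset.univ.val.filter (fun a => X a j = v))
          = (Finset.univ.filter (fun a => X a j = v)).card := rfl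
      rw [h2, card_filter_eq_one (hbij j) v, mul_one]
  -- finiteness
  have hfin : {K : Multiset (Fin d → Fin n) | IsKMultiplex (SdSet op e d) k K}.Finite := by
    classical
    apply Set.Finite.subset (Set.finite_range
      (Sym.toMultiset : Sym (Fin d → Fin n) (k * n) → Multiset (Fin d → Fin n)))
    intro L hL
    exact ⟨⟨L, hL.1⟩, rfl⟩
  rw [Perk, Set.ncard_pos hfin]
  exact ⟨K, hKmult⟩
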